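/- Let C be a k-dimensional ZMod 2-linear subspace of (Fin n → ZMod 2), let p : Fin n → ℝ with 0 ≤ p i ≤ 1 be coordinate 1-probabilities, let x_max be the most probable vector for p, and set δ_max = max_{i} |1/2 − p i|. Let q : Fin n → ℝ be the constant probability vector with q i = 1/2 − δ_max for all i. Then P_q[C] ≥ P_p[x_max + C]; that is, the probability of the set of codewords under the identically distributed worst-case bias δ_max is at least the probability of the most probable coset under the original (possibly non-identical) distributions. -/

import Mathlib

open Finset

noncomputable def chi (z : ZMod 2) : ℝ := if z = 1 then -1 else 1

lemma chi_zero : chi 0 = 1 := by rw [chi, if_neg (by decide)]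
lemma chi_one : chi 1 = -1 := by rw [chi, if_pos rfl]

lemma chi_add (a b : ZMod 2) : chi (a + b) = chi a * chi b := by
  have h : ∀ x : ZMod 2, x = 0 ∨ x = 1 := by decide
  rcases h a with ha | ha <;> rcases h b with hb | hb <;>
    simp [ha, hb, chi_zero, chi_one, show (1 + 1 : ZMod 2) = 0 by decide]

lemma chi_add_one (a : ZMod 2) : chi (a + 1) = -chi a := by
  rw [chi_add, chi_one]; ring

lemma chi_prod {ι : Type*} [DecidableEq ι] (s : Finset ι) (f : ι → ZMod 2) :
    ∏ i ∈ s, chi (f i) = chi (∑ i ∈ s, f i) := by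
  induction s using Finset.induction_on with
  | empty => simp [chi_zero]
  | insert a s h ih => rw [Finset.prod_insert h, Finset.sum_insert h, chi_add, ih]

open Classical in
lemma charSum_nonneg {n : ℕ} (C : Submodule (ZMod 2) (Fin n → ZMod 2)) (T : Finset (Fin n)) :
    0 ≤ ∑ c ∈ Finset.univ.filter (· ∈ C), chi (∑ i ∈ T, c i) := by
  classical
  by_cases h : ∀ c ∈ C, ∑ i ∈ T, c i = 0
  · apply Finset.sum_nonneg
    intro c hc
    rw [Finset.mem_filter] at hc
    rw [h c hc.2, chi_zero]; norm_num
  · push_neg at h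
    obtain ⟨c0, hc0, hne⟩ := h
    have hc0one : ∑ i ∈ T, c0 i = 1 := by
      have : ∀ x : ZMod 2, x ≠ 0 → x = 1 := by decide
      exact this _ hne
    have key : (∑ c ∈ Finset.univ.filter (· ∈ C), chi (∑ i ∈ T, c i))
        = -∑ c ∈ Finset.univ.filter (· ∈ C), chi (∑ i ∈ T, c i) := by
      nth_rewrite 1 [Finset.sum_equiv (Equiv.addRight c0)
        (t := Finset.univ.filter (· ∈ C)) (g := fun c => chi ((∑ i ∈ T, c i) + 1))]
      · rw [← Finset.sum_neg_distrib]
        exact Finset.sum_congr rfl fun c _ => chi_add_one _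
      · intro c
        simp only [Finset.mem_filter, Finset.mem_univ, true_and, Equiv.coe_addRight]
        constructor
        · intro hcC; exact C.add_mem hcC hc0
        · intro hcC
          have := C.add_mem hcC (C.neg_mem hc0)
          simpa using this
      · intro c hc
        simp only [Equiv.coe_addRight]
        congr 1
        have : ∑ x ∈ T, (c + c0) x = ∑ i ∈ T, c i + 1 := by
          simp only [Pi.add_apply]
          rw [Finset.sum_add_distrib, hc0one]
        rw [this, add_assoc, show (1 + 1 : ZMod 2) = 0 by decide, add_zero]
    linarith

open Classical in
lemma expand_sum {n : ℕ} (C : Submodule (ZMod 2) (Fin n → ZMod 2)) (δ : Fin n → ℝ) :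
    ∑ c ∈ Finset.univ.filter (· ∈ C), ∏ i, (1/2 + chi (c i) * δ i)
      = ∑ T ∈ (Finset.univ : Finset (Fin n)).powerset,
          (∑ c ∈ Finset.univ.filter (· ∈ C), chi (∑ i ∈ T, c i)) *
            ((∏ _i ∈ Finset.univ \ T, (1/2 : ℝ)) * ∏ i ∈ T, δ i) := by
  classical
  have step1 : ∀ c : Fin n → ZMod 2, ∏ i, (1/2 + chi (c i) * δ i)
      = ∑ T ∈ (Finset.univ : Finset (Fin n)).powerset,
          chi (∑ i ∈ T, c i) * ((∏ _i ∈ Finset.univ \ T, (1/2 : ℝ)) * ∏ i ∈ T, δ i) := by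
    intro c
    have : ∏ i, (1/2 + chi (c i) * δ i) = ∏ i, (chi (c i) * δ i + 1/2) := by
      apply Finset.prod_congr rfl; intros; ring
    rw [this, Finset.prod_add]
    apply Finset.sum_congr rfl
    intro T _
    rw [Finset.prod_mul_distrib, chi_prod]
    ring
  calc ∑ c ∈ Finset.univ.filter (· ∈ C), ∏ i, (1/2 + chi (c i) * δ i)
      = ∑ c ∈ Finset.univ.filter (· ∈ C), ∑ T ∈ (Finset.univ : Finset (Fin n)).powerset,
          chi (∑ i ∈ T, c i) * ((∏ _i ∈ Finset.univ \ T, (1/2 : ℝ)) * ∏ i ∈ T, δ i) :=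
        Finset.sum_congr rfl fun c _ => step1 c
    _ = ∑ T ∈ (Finset.univ : Finset (Fin n)).powerset, ∑ c ∈ Finset.univ.filter (· ∈ C),
          chi (∑ i ∈ T, c i) * ((∏ _i ∈ Finset.univ \ T, (1/2 : ℝ)) * ∏ i ∈ T, δ i) :=
        Finset.sum_comm
    _ = _ := Finset.sum_congr rfl fun T _ => by rw [← Finset.sum_mul]


open Classical in
/-- Probability of a set of bit-vectors under independent, not necessarily identically
distributed bits with coordinate 1-probabilities `p`. -/
noncomputable def probOf {n : ℕ} (p : Fin n → ℝ) (S : Set (Fin n → ZMod 2)) : ℝ :=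
  ∑ x : Fin n → ZMod 2,
    if x ∈ S then (∏ i, if x i = 1 then p i else 1 - p i) else 0

open Classical in
lemma probOf_eq {n : ℕ} (p : Fin n → ℝ) (S : Set (Fin n → ZMod 2)) :
    probOf p S = ∑ x ∈ Finset.univ.filter (· ∈ S),
      ∏ i, if x i = 1 then p i else 1 - p i := by
  rw [probOf, Finset.sum_filter]

/-- The probability of the set of codewords under the identically distributed
worst-case bias `δmax` is at least the probability of the most probable coset under the
original (possibly non-identical) distributions. -/
theorem worst_case_bias_dominates {n k : ℕ}
    (C : Submodule (ZMod 2) (Fin n → ZMod 2))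
    (hk : Module.finrank (ZMod 2) C = k)
    (p : Fin n → ℝ) (hp : ∀ i, 0 ≤ p i ∧ p i ≤ 1)
    (xmax : Fin n → ZMod 2)
    (hxmax : ∀ i, xmax i = if (1 : ℝ) / 2 ≤ p i then 1 else 0)
    (δmax : ℝ)
    (hδ : IsGreatest (Set.range fun i => |1 / 2 - p i|) δmax) :
    probOf p ((xmax + ·) '' (C : Set _)) ≤
      probOf (fun _ : Fin n => 1 / 2 - δmax) (C : Set _) := by
  classical
  have hδle : ∀ i, |1 / 2 - p i| ≤ δmax := fun i => hδ.2 ⟨i, rfl⟩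
  -- rewrite LHS
  have zmod2cases : ∀ x : ZMod 2, x = 0 ∨ x = 1 := by decide
  have hLHS : probOf p ((xmax + ·) '' (C : Set _))
      = ∑ c ∈ Finset.univ.filter (· ∈ C), ∏ i, (1/2 + chi (c i) * |1 / 2 - p i|) := by
    rw [probOf_eq]
    have reindex : (∑ x ∈ Finset.univ.filter (· ∈ ((xmax + ·) '' (C : Set _))),
          ∏ i, if x i = 1 then p i else 1 - p i)
        = ∑ c ∈ Finset.univ.filter (· ∈ C),
          ∏ i, if (xmax + c) i = 1 then p i else 1 - p i := by
      refine (Finset.sum_equiv (Equiv.addLeft xmax)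
        (s := Finset.univ.filter (· ∈ C))
        (t := Finset.univ.filter (· ∈ ((xmax + ·) '' (C : Set _))))
        (f := fun c => ∏ i, if (xmax + c) i = 1 then p i else 1 - p i)
        (g := fun x => ∏ i, if x i = 1 then p i else 1 - p i)
        ?_ (fun c _ => rfl)).symm
      intro c
      simp only [Finset.mem_filter, Finset.mem_univ, true_and, Equiv.coe_addLeft,
        Set.mem_image, SetLike.mem_coe]
      constructor
      · intro hc; exact ⟨c, hc, rfl⟩
      · rintro ⟨a, ha, hax⟩
        have hac : a = c := add_left_cancel hax
        exact hac ▸ ha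
    rw [reindex]
    apply Finset.sum_congr rfl
    intro c _
    apply Finset.prod_congr rfl
    intro i _
    simp only [Pi.add_apply]
    rcases zmod2cases (c i) with hci | hci <;>
      rcases le_or_gt (1/2 : ℝ) (p i) with hpi | hpi
    · simp only [hci, add_zero, hxmax i, if_pos hpi, if_pos rfl, chi_zero,
        abs_of_nonpos (by linarith : (1:ℝ)/2 - p i ≤ 0), if_true]
      ring
    · simp only [hci, add_zero, hxmax i, if_neg (not_le.mpr hpi), chi_zero,
        abs_of_nonneg (by linarith : (0:ℝ) ≤ 1/2 - p i),
        if_neg (show (0 : ZMod 2) ≠ 1 by decide)]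
      ring
    · simp only [hci, hxmax i, if_pos hpi, show (1 + 1 : ZMod 2) = 0 by decide,
        if_neg (show (0 : ZMod 2) ≠ 1 by decide), chi_one,
        abs_of_nonpos (by linarith : (1:ℝ)/2 - p i ≤ 0)]
      ring
    · simp only [hci, hxmax i, if_neg (not_le.mpr hpi), zero_add, if_pos rfl, chi_one,
        abs_of_nonneg (by linarith : (0:ℝ) ≤ 1/2 - p i), if_true]
      ring
  have hRHS : probOf (fun _ : Fin n => 1 / 2 - δmax) (C : Set _)
      = ∑ c ∈ Finset.univ.filter (· ∈ C), ∏ i, (1/2 + chi (c i) * δmax) := by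
    rw [probOf_eq]
    apply Finset.sum_congr (by simp) -- filters should match
    intro c _
    apply Finset.prod_congr rfl
    intro i _
    rcases zmod2cases (c i) with hci | hci <;> rw [hci]
    · rw [if_neg (by decide), chi_zero]; ring
    · rw [if_pos rfl, chi_one]; ring
  rw [hLHS, hRHS, expand_sum C (fun i => |1 / 2 - p i|), expand_sum C (fun _ => δmax)]
  apply Finset.sum_le_sum
  intro T _
  apply mul_le_mul_of_nonneg_left _ (charSum_nonneg C T)
  apply mul_le_mul_of_nonneg_left _ (Finset.prod_nonneg (fun _ _ => by norm_num))
  exact Finset.prod_le_prod (fun i _ => abs_nonneg _) (fun i _ => hδle i)
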